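/- Let the edges of the complete 4-partite graph K_2^4 with parts X_1, X_2, X_3, X_4 (each of size 2) be colored with 2 colors in such a way that every vertex has degree exactly 3 in each of the two colors. If there exists a vertex x and a color c such that some part X_i not containing x is entirely contained in the neighborhood of x in color c, then the coloring contains a monochromatic cycle C_4. -/

import Mathlib

/-- The complete multipartite graph with `p` parts, each of size `n`:
vertices are pairs `(part, index)`, adjacent iff they lie in different parts. -/
def completeMultipartite (p n : ℕ) : SimpleGraph (Fin p × Fin n) where
  Adj v w := v.1 ≠ w.1
  symm := ⟨fun _ _ h => h.symm⟩
  loopless := ⟨fun _ h => h rfl⟩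

instance (p n : ℕ) : DecidableRel (completeMultipartite p n).Adj :=
  fun v w => inferInstanceAs (Decidable (v.1 ≠ w.1))

/-- The edge coloring `c` contains a monochromatic cycle `C₄` in the graph `G`. -/
def HasMonoC4 {V : Type*} (G : SimpleGraph V) {k : ℕ} (c : Sym2 V → Fin k) : Prop :=
  ∃ v₁ v₂ v₃ v₄ : V,
    v₁ ≠ v₂ ∧ v₁ ≠ v₃ ∧ v₁ ≠ v₄ ∧ v₂ ≠ v₃ ∧ v₂ ≠ v₄ ∧ v₃ ≠ v₄ ∧
    G.Adj v₁ v₂ ∧ G.Adj v₂ v₃ ∧ G.Adj v₃ v₄ ∧ G.Adj v₄ v₁ ∧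
    c s(v₁, v₂) = c s(v₂, v₃) ∧ c s(v₂, v₃) = c s(v₃, v₄) ∧ c s(v₃, v₄) = c s(v₄, v₁)

/-- The `p`-partite Ramsey number `r_p(C₄, k)`: the least positive `n` such that every
`k`-coloring of the edges of `K_n^p` contains a monochromatic `C₄`. -/
noncomputable def multipartiteRamsey (p k : ℕ) : ℕ :=
  sInf {n : ℕ | 0 < n ∧
    ∀ c : Sym2 (Fin p × Fin n) → Fin k, HasMonoC4 (completeMultipartite p n) c}

/-- The degree of the vertex `x` in color `i` under the edge coloring `c` of `K_2^4`. -/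
def colorDegree (c : Sym2 (Fin 4 × Fin 2) → Fin 2) (x : Fin 4 × Fin 2) (i : Fin 2) : ℕ :=
  (Finset.univ.filter fun y => (completeMultipartite 4 2).Adj x y ∧ c s(x, y) = i).card

/-- Suppose the edges of `K_2^4` are 2-colored so that every vertex has degree exactly 3
in each color. If some part `X_j` not containing the vertex `x` is entirely contained in
the neighborhood of `x` in some color `i`, then there is a monochromatic `C₄`. -/
theorem hasMonoC4_of_part_subset_colorNeighborhood (c : Sym2 (Fin 4 × Fin 2) → Fin 2)
    (hdeg : ∀ x : Fin 4 × Fin 2, ∀ i : Fin 2, colorDegree c x i = 3)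
    (x : Fin 4 × Fin 2) (i : Fin 2) (j : Fin 4) (hj : x.1 ≠ j)
    (hsub : ∀ y : Fin 4 × Fin 2, y.1 = j →
      (completeMultipartite 4 2).Adj x y ∧ c s(x, y) = i) :
    HasMonoC4 (completeMultipartite 4 2) c := by
  classical
  by_contra h
  set G := completeMultipartite 4 2 with hG
  let N : Fin 4 × Fin 2 → Fin 2 → Finset (Fin 4 × Fin 2) :=
    fun u k => Finset.univ.filter fun y => (completeMultipartite 4 2).Adj u y ∧ c s(u, y) = k
  have hN : ∀ u k, (N u k).card = 3 := fun u k => hdeg u k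
  -- any two distinct vertices have at most one common neighbor in each color
  have key : ∀ u v : Fin 4 × Fin 2, u ≠ v → ∀ k, (N u k ∩ N v k).card ≤ 1 := by
    intro u v huv k
    by_contra hc
    push_neg at hc
    obtain ⟨a, ha, b, hb, hab⟩ := Finset.one_lt_card.mp hc
    simp only [N, Finset.mem_inter, Finset.mem_filter, Finset.mem_univ, true_and] at ha hb
    obtain ⟨⟨hua, hca⟩, hva, hca'⟩ := ha
    obtain ⟨⟨hub, hcb⟩, hvb, hcb'⟩ := hb
    exact h ⟨u, a, v, b, hua.ne, huv, hub.ne, hva.ne.symm, hab, hvb.ne,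
      hua, hva.symm, hvb, hub.symm,
      by rw [show s(a, v) = s(v, a) from Sym2.eq_swap, hca, hca'],
      by rw [show s(a, v) = s(v, a) from Sym2.eq_swap, hca', hcb'],
      by rw [show s(b, u) = s(u, b) from Sym2.eq_swap, hcb, hcb']⟩
  -- the other color
  set i' : Fin 2 := i + 1 with hi'
  have hii'' : ∀ k : Fin 2, k + 1 ≠ k := by decide
  have hii' : i' ≠ i := hii'' i
  -- the two vertices of part j
  set y₁ : Fin 4 × Fin 2 := (j, 0) with hy1
  set y₂ : Fin 4 × Fin 2 := (j, 1) with hy2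
  obtain ⟨hadj1, hc1⟩ := hsub y₁ rfl
  obtain ⟨hadj2, hc2⟩ := hsub y₂ rfl
  have hxy1 : x ≠ y₁ := fun e => hj (by rw [e])
  have hxy2 : x ≠ y₂ := fun e => hj (by rw [e])
  have h12 : y₁ ≠ y₂ := by simp [hy1, hy2]
  -- the ambient 5-set
  set S : Finset (Fin 4 × Fin 2) := Finset.univ.filter (fun a => a.1 ≠ j ∧ a ≠ x) with hSdef
  have hScard : S.card = 5 := by
    have : ∀ (x : Fin 4 × Fin 2) (j : Fin 4), x.1 ≠ j →
        (Finset.univ.filter (fun a : Fin 4 × Fin 2 => a.1 ≠ j ∧ a ≠ x)).card = 5 := by decide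
    exact this x j hj
  have hN1S : N y₁ i' ⊆ S := by
    intro a ha
    simp only [N, Finset.mem_filter, Finset.mem_univ, true_and] at ha
    obtain ⟨hadj, hcadj⟩ := ha
    refine Finset.mem_filter.mpr ⟨Finset.mem_univ _, fun e => hadj e.symm, fun e => ?_⟩
    rw [e, show s(y₁, x) = s(x, y₁) from Sym2.eq_swap, hc1] at hcadj
    exact hii' hcadj.symm
  have hN2S : N y₂ i' ⊆ S := by
    intro a ha
    simp only [N, Finset.mem_filter, Finset.mem_univ, true_and] at ha
    obtain ⟨hadj, hcadj⟩ := ha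
    refine Finset.mem_filter.mpr ⟨Finset.mem_univ _, fun e => hadj e.symm, fun e => ?_⟩
    rw [e, show s(y₂, x) = s(x, y₂) from Sym2.eq_swap, hc2] at hcadj
    exact hii' hcadj.symm
  have hTS : N x i' ⊆ S := by
    intro a ha
    simp only [N, Finset.mem_filter, Finset.mem_univ, true_and] at ha
    obtain ⟨hadj, hcadj⟩ := ha
    refine Finset.mem_filter.mpr ⟨Finset.mem_univ _, fun e => ?_, hadj.ne'⟩
    exact hii' (hcadj ▸ (hsub a e).2)
  -- `N y₁ i'` and `N y₂ i'` cover S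
  have hinter : (N y₁ i' ∩ N y₂ i').card ≤ 1 := key y₁ y₂ h12 i'
  have hunion : (N y₁ i' ∪ N y₂ i') = S := by
    apply Finset.eq_of_subset_of_card_le (Finset.union_subset hN1S hN2S)
    have := Finset.card_union_add_card_inter (N y₁ i') (N y₂ i')
    rw [hN y₁ i', hN y₂ i'] at this
    omega
  -- but T meets each of them in at most one vertex
  have h1 : (N x i' ∩ N y₁ i').card ≤ 1 := key x y₁ hxy1 i'
  have h2 : (N x i' ∩ N y₂ i').card ≤ 1 := key x y₂ hxy2 i'
  have hTsub : N x i' ⊆ N y₁ i' ∪ N y₂ i' := hunion ▸ hTS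
  have hsplit : N x i' = (N x i' ∩ N y₁ i') ∪ (N x i' ∩ N y₂ i') := by
    rw [← Finset.inter_union_distrib_left, Finset.inter_eq_left.mpr hTsub]
  have : (N x i').card ≤ 2 := by
    rw [hsplit]
    calc ((N x i' ∩ N y₁ i') ∪ (N x i' ∩ N y₂ i')).card
        ≤ (N x i' ∩ N y₁ i').card + (N x i' ∩ N y₂ i').card := Finset.card_union_le _ _
      _ ≤ 2 := by omega
  rw [hN x i'] at this
  omega
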